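/- Let m ≥ 3 and set k = ⌊(m+1)/3⌋. Then Σ over all subsets I ⊆ ZMod m containing no two cyclically consecutive elements (i.e., there is no i with both i ∈ I and i+1 ∈ I), of (−1)^{card I}, equals 2·(−1)^k if 3 divides m, and (−1)^k otherwise. (Equivalently, the reduced Euler characteristic of the independence complex Ind(C_m) equals 2(−1)^{k−1} if m = 3k and (−1)^{k−1} if m = 3k±1, consistent with Ind(C_m) ≃ S^{k−1} ∨ S^{k−1} resp. S^{k−1}.) -/

import Mathlib

def Pseq : ℕ → ℤ
  | 0 => 1
  | 1 => 0
  | (n+2) => Pseq (n+1) - Pseq n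

def pathSet (n : ℕ) : Finset (Finset ℕ) :=
  (Finset.range n).powerset.filter (fun J => ∀ j ∈ J, j+1 ∉ J)

lemma Pseq_add_six (n : ℕ) : Pseq (n+6) = Pseq n := by
  simp [Pseq]

lemma path_sum : ∀ n, ∑ J ∈ pathSet n, (-1:ℤ)^J.card = Pseq n := by
  intro n
  induction n using Nat.strong_induction_on with
  | _ n ih =>
    match n with
    | 0 => decide
    | 1 => decide
    | (n+2) =>
      rw [← Finset.sum_filter_add_sum_filter_not (pathSet (n+2)) (fun J => (n+1) ∈ J)]
      have h1 : (pathSet (n+2)).filter (fun J => (n+1) ∉ J) = pathSet (n+1) := by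
        ext J
        simp only [pathSet, Finset.mem_filter, Finset.mem_powerset]
        constructor
        · rintro ⟨⟨hsub, hind⟩, hn⟩
          refine ⟨fun x hx => ?_, hind⟩
          have := hsub hx
          simp only [Finset.mem_range] at *
          rcases Nat.lt_succ_iff_lt_or_eq.mp this with h | h
          · exact h
          · exact absurd (h ▸ hx) hn
        · rintro ⟨hsub, hind⟩
          refine ⟨⟨hsub.trans ?_, hind⟩, fun hn => ?_⟩
          · intro x; simp only [Finset.mem_range]; omega
          · have := hsub hn; simp at this
      have h2 : (pathSet (n+2)).filter (fun J => (n+1) ∈ J)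
          = (pathSet n).image (insert (n+1)) := by
        ext J
        simp only [pathSet, Finset.mem_filter, Finset.mem_powerset, Finset.mem_image]
        constructor
        · rintro ⟨⟨hsub, hind⟩, hn⟩
          refine ⟨J.erase (n+1), ⟨⟨fun x hx => ?_, fun j hj => ?_⟩, ?_⟩⟩
          · have hxJ := Finset.mem_of_mem_erase hx
            have hx1 : x ≠ n+1 := Finset.ne_of_mem_erase hx
            have := hsub hxJ
            simp only [Finset.mem_range] at *
            have hxn : x ≠ n := by
              rintro rfl
              exact hind x hxJ hn
            omega
          · intro hj1
            exact hind j (Finset.mem_of_mem_erase hj) (Finset.mem_of_mem_erase hj1)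
          · exact Finset.insert_erase hn
        · rintro ⟨J', ⟨⟨hsub, hind⟩, rfl⟩⟩
          have hn1 : (n+1) ∉ J' := fun h => by have := hsub h; simp at this
          refine ⟨⟨?_, ?_⟩, Finset.mem_insert_self _ _⟩
          · intro x hx
            rcases Finset.mem_insert.mp hx with rfl | hx
            · simp
            · have := hsub hx; simp only [Finset.mem_range] at *; omega
          · intro i hi hi1
            rcases Finset.mem_insert.mp hi with rfl | hi
            · rcases Finset.mem_insert.mp hi1 with h | h
              · omega
              · have := hsub h; simp only [Finset.mem_range] at this; omega
            · rcases Finset.mem_insert.mp hi1 with h | h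
              · have := hsub hi; simp only [Finset.mem_range] at this; omega
              · exact hind i hi h
      rw [h1, h2]
      rw [Finset.sum_image (by
        intro a ha b hb hab
        simp only [pathSet, Finset.mem_coe, Finset.mem_filter, Finset.mem_powerset] at ha hb
        have haN : (n+1) ∉ a := fun h => by have := ha.1 h; simp at this
        have hbN : (n+1) ∉ b := fun h => by have := hb.1 h; simp at this
        have := Finset.erase_insert haN
        have := Finset.erase_insert hbN
        rw [← Finset.erase_insert haN, ← Finset.erase_insert hbN, hab])]
      have h3 : ∀ J ∈ pathSet n, (-1:ℤ)^(insert (n+1) J).card = -(-1:ℤ)^J.card := by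
        intro J hJ
        simp only [pathSet, Finset.mem_filter, Finset.mem_powerset] at hJ
        have : (n+1) ∉ J := fun h => by have := hJ.1 h; simp at this
        rw [Finset.card_insert_of_notMem this, pow_succ]
        ring
      rw [Finset.sum_congr rfl h3, ih (n+1) (by omega), Finset.sum_neg_distrib, ih n (by omega)]
      rw [show Pseq (n+2) = Pseq (n+1) - Pseq n from rfl]
      ring

lemma numeric : ∀ m, 3 ≤ m → Pseq (m-1) - Pseq (m-3)
    = (if 3 ∣ m then 2*(-1:ℤ)^((m+1)/3) else (-1:ℤ)^((m+1)/3)) := by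
  intro m
  induction m using Nat.strong_induction_on with
  | _ m ih =>
    intro hm
    by_cases h9 : m < 9
    · interval_cases m <;> norm_num [Pseq]
    · obtain ⟨k, rfl⟩ : ∃ k, m = k + 6 := ⟨m - 6, by omega⟩
      have hk : 3 ≤ k := by omega
      have e1 : k + 6 - 1 = (k-1) + 6 := by omega
      have e3 : k + 6 - 3 = (k-3) + 6 := by omega
      rw [e1, e3, Pseq_add_six, Pseq_add_six]
      have := ih k (by omega) hk
      rw [show k - 1 = k - 1 from rfl] at this
      have hdvd : (3 ∣ k + 6) ↔ (3 ∣ k) := by omega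
      have hdiv : (k + 6 + 1) / 3 = (k+1)/3 + 2 := by omega
      rw [hdiv, pow_add]
      simp only [hdvd]
      rw [this]
      split <;> ring

section
variable {m : ℕ} [NeZero m]

lemma zcast_val (a : ZMod m) : ((a.val : ℕ) : ZMod m) = a :=
  ZMod.natCast_rightInverse a

lemma zval_inj {a b : ZMod m} (h : a.val = b.val) : a = b := by
  rw [← zcast_val a, ← zcast_val b, h]

lemma val_succ (hm : 3 ≤ m) (a : ZMod m) : (a + 1).val = (a.val + 1) % m := by
  haveI : Fact (1 < m) := ⟨by omega⟩
  rw [ZMod.val_add, ZMod.val_one]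

lemma sumA (hm : 3 ≤ m) :
    ∑ I ∈ (Finset.univ.filter (fun I : Finset (ZMod m) => ∀ i ∈ I, i + 1 ∉ I)).filter
        (fun I => (0:ZMod m) ∉ I), (-1:ℤ)^I.card = Pseq (m-1) := by
  rw [← path_sum (m-1)]
  refine Finset.sum_nbij' (i := fun I => I.image (fun x : ZMod m => x.val - 1))
    (j := fun J => J.image (fun a : ℕ => ((a+1 : ℕ) : ZMod m))) ?_ ?_ ?_ ?_ ?_
  · -- forward membership
    intro I hI
    simp only [Finset.mem_filter, Finset.mem_univ, true_and] at hI
    obtain ⟨hind, h0⟩ := hI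
    have hval : ∀ x ∈ I, 1 ≤ x.val ∧ x.val < m := by
      intro x hx
      refine ⟨?_, ZMod.val_lt x⟩
      rcases Nat.eq_zero_or_pos x.val with h | h
      · exact absurd ((ZMod.val_eq_zero x).mp h ▸ hx) h0
      · exact h
    simp only [pathSet, Finset.mem_filter, Finset.mem_powerset]
    constructor
    · intro t ht
      simp only [Finset.mem_image] at ht
      obtain ⟨x, hx, rfl⟩ := ht
      have := hval x hx
      simp only [Finset.mem_range]; omega
    · intro t ht ht1
      simp only [Finset.mem_image] at ht ht1
      obtain ⟨a, ha, hat⟩ := ht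
      obtain ⟨b, hb, hbt⟩ := ht1
      have hva := hval a ha
      have hvb := hval b hb
      have hba : b.val = a.val + 1 := by omega
      have : b = a + 1 := by
        apply zval_inj
        rw [val_succ hm, hba, Nat.mod_eq_of_lt (by have := ZMod.val_lt b; omega)]
      exact hind a ha (this ▸ hb)
  · -- backward membership
    intro J hJ
    simp only [pathSet, Finset.mem_filter, Finset.mem_powerset] at hJ
    obtain ⟨hsub, hind⟩ := hJ
    have hlt : ∀ a ∈ J, a + 1 < m := by
      intro a ha; have := hsub ha; simp only [Finset.mem_range] at this; omega
    simp only [Finset.mem_filter, Finset.mem_univ, true_and]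
    constructor
    · intro x hx hx1
      simp only [Finset.mem_image] at hx hx1
      obtain ⟨a, ha, rfl⟩ := hx
      obtain ⟨b, hb, hbx⟩ := hx1
      have hva : ((a+1 : ℕ) : ZMod m).val = a + 1 := ZMod.val_cast_of_lt (hlt a ha)
      have hvb : ((b+1 : ℕ) : ZMod m).val = b + 1 := ZMod.val_cast_of_lt (hlt b hb)
      have hs : ((((a:ℕ)+1 : ℕ) : ZMod m) + 1).val = (a + 2) % m := by
        rw [val_succ hm, hva]
      rcases Nat.lt_or_ge (a+2) m with h | h
      · rw [Nat.mod_eq_of_lt h] at hs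
        have hb1 : b + 1 = a + 2 := by rw [← hvb, hbx, hs]
        have hb' : b = a + 1 := by omega
        exact hind a ha (hb' ▸ hb)
      · have ham : a + 2 = m := by have := hlt a ha; omega
        rw [ham, Nat.mod_self] at hs
        have : b + 1 = 0 := by rw [← hvb, hbx, hs]
        omega
    · intro h0
      simp only [Finset.mem_image] at h0
      obtain ⟨a, ha, ha0⟩ := h0
      have := ZMod.val_cast_of_lt (hlt a ha)
      rw [ha0, ZMod.val_zero] at this
      omega
  · -- left inverse
    intro I hI
    simp only [Finset.mem_filter, Finset.mem_univ, true_and] at hI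
    rw [Finset.image_image]
    conv_rhs => rw [← Finset.image_id (s := I)]
    apply Finset.image_congr
    intro x hx
    simp only [Finset.mem_coe, Finset.mem_image] at hx
    have h1 : 1 ≤ x.val := by
      rcases Nat.eq_zero_or_pos x.val with h | h
      · exact absurd ((ZMod.val_eq_zero x).mp h ▸ hx) hI.2
      · exact h
    simp only [Function.comp_apply, id_eq]
    rw [show x.val - 1 + 1 = x.val by omega, zcast_val]
  · -- right inverse
    intro J hJ
    simp only [pathSet, Finset.mem_filter, Finset.mem_powerset] at hJ
    rw [Finset.image_image]
    conv_rhs => rw [← Finset.image_id (s := J)]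
    apply Finset.image_congr
    intro a ha
    simp only [Finset.mem_coe] at ha
    have hlt : a + 1 < m := by
      have := hJ.1 ha; simp only [Finset.mem_range] at this; omega
    simp only [Function.comp_apply, id_eq]
    rw [ZMod.val_cast_of_lt hlt]
    omega
  · -- values
    intro I hI
    simp only [Finset.mem_filter, Finset.mem_univ, true_and] at hI
    congr 1
    rw [Finset.card_image_of_injOn]
    intro a ha b hb hab
    dsimp only at hab
    have h1 : 1 ≤ (a : ZMod m).val := by
      rcases Nat.eq_zero_or_pos (ZMod.val a) with h | h
      · exact absurd ((ZMod.val_eq_zero a).mp h ▸ ha) hI.2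
      · exact h
    have h2 : 1 ≤ (b : ZMod m).val := by
      rcases Nat.eq_zero_or_pos (ZMod.val b) with h | h
      · exact absurd ((ZMod.val_eq_zero b).mp h ▸ hb) hI.2
      · exact h
    exact zval_inj (by omega)
end

section
variable {m : ℕ} [NeZero m]

lemma sumB (hm : 3 ≤ m) :
    ∑ I ∈ (Finset.univ.filter (fun I : Finset (ZMod m) => ∀ i ∈ I, i + 1 ∉ I)).filter
        (fun I => (0:ZMod m) ∈ I), (-1:ℤ)^I.card = - Pseq (m-3) := by
  rw [← path_sum (m-3), ← Finset.sum_neg_distrib]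
  -- key: elements of I other than 0 have val in [2, m-2]
  have key : ∀ I : Finset (ZMod m), (∀ i ∈ I, i + 1 ∉ I) → (0:ZMod m) ∈ I →
      ∀ x ∈ I.erase 0, 2 ≤ x.val ∧ x.val ≤ m - 2 := by
    intro I hind h0 x hx
    have hxI := Finset.mem_of_mem_erase hx
    have hx0 : x ≠ 0 := Finset.ne_of_mem_erase hx
    have h1 : 1 ≤ x.val := by
      rcases Nat.eq_zero_or_pos x.val with h | h
      · exact absurd ((ZMod.val_eq_zero x).mp h) hx0
      · exact h
    have hlt := ZMod.val_lt x
    constructor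
    · rcases Nat.lt_or_ge x.val 2 with h | h
      · exfalso
        have hx1 : x.val = 1 := by omega
        have : x = 0 + 1 := by
          apply zval_inj
          rw [val_succ hm, ZMod.val_zero, hx1, Nat.mod_eq_of_lt (by omega)]
        exact hind 0 h0 (this ▸ hxI)
      · exact h
    · rcases Nat.lt_or_ge x.val (m-1) with h | h
      · omega
      · exfalso
        have hxm : x.val = m - 1 := by omega
        have : x + 1 = 0 := by
          apply zval_inj
          rw [val_succ hm, hxm, ZMod.val_zero, show m - 1 + 1 = m by omega, Nat.mod_self]
        exact hind x hxI (this ▸ h0)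
  refine Finset.sum_nbij' (i := fun I => (I.erase 0).image (fun x : ZMod m => x.val - 2))
    (j := fun J => insert (0 : ZMod m) (J.image (fun a : ℕ => ((a+2 : ℕ) : ZMod m)))) ?_ ?_ ?_ ?_ ?_
  · -- forward membership
    intro I hI
    simp only [Finset.mem_filter, Finset.mem_univ, true_and] at hI
    obtain ⟨hind, h0⟩ := hI
    have hk := key I hind h0
    simp only [pathSet, Finset.mem_filter, Finset.mem_powerset]
    constructor
    · intro t ht
      simp only [Finset.mem_image] at ht
      obtain ⟨x, hx, rfl⟩ := ht
      have := hk x hx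
      simp only [Finset.mem_range]; omega
    · intro t ht ht1
      simp only [Finset.mem_image] at ht ht1
      obtain ⟨a, ha, hat⟩ := ht
      obtain ⟨b, hb, hbt⟩ := ht1
      have hva := hk a ha
      have hvb := hk b hb
      have hba : b.val = a.val + 1 := by omega
      have : b = a + 1 := by
        apply zval_inj
        rw [val_succ hm, hba, Nat.mod_eq_of_lt (by have := ZMod.val_lt b; omega)]
      exact hind a (Finset.mem_of_mem_erase ha) (this ▸ Finset.mem_of_mem_erase hb)
  · -- backward membership
    intro J hJ
    simp only [pathSet, Finset.mem_filter, Finset.mem_powerset] at hJ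
    obtain ⟨hsub, hind⟩ := hJ
    have hlt : ∀ a ∈ J, a + 3 < m := by
      intro a ha; have := hsub ha; simp only [Finset.mem_range] at this; omega
    have hvcast : ∀ a ∈ J, ((a+2 : ℕ) : ZMod m).val = a + 2 := by
      intro a ha; exact ZMod.val_cast_of_lt (by have := hlt a ha; omega)
    simp only [Finset.mem_filter, Finset.mem_univ, true_and]
    refine ⟨?_, Finset.mem_insert_self _ _⟩
    intro x hx hx1
    rcases Finset.mem_insert.mp hx with rfl | hx
    · -- x = 0 : show 0 + 1 ∉ insert 0 (image)
      rcases Finset.mem_insert.mp hx1 with h | h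
      · -- 0 + 1 = 0
        have : ((0:ZMod m) + 1).val = 1 := by
          rw [val_succ hm, ZMod.val_zero, Nat.mod_eq_of_lt (by omega)]
        rw [h, ZMod.val_zero] at this; omega
      · simp only [Finset.mem_image] at h
        obtain ⟨a, ha, hax⟩ := h
        have h1 : ((0:ZMod m) + 1).val = 1 := by
          rw [val_succ hm, ZMod.val_zero, Nat.mod_eq_of_lt (by omega)]
        rw [← hax, hvcast a ha] at h1; omega
    · simp only [Finset.mem_image] at hx
      obtain ⟨a, ha, rfl⟩ := hx
      have hs : (((a+2 : ℕ) : ZMod m) + 1).val = a + 3 := by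
        rw [val_succ hm, hvcast a ha, Nat.mod_eq_of_lt (by have := hlt a ha; omega)]
      rcases Finset.mem_insert.mp hx1 with h | h
      · rw [h, ZMod.val_zero] at hs; omega
      · simp only [Finset.mem_image] at h
        obtain ⟨b, hb, hbx⟩ := h
        have : b + 2 = a + 3 := by rw [← hvcast b hb, hbx, hs]
        have hb' : b = a + 1 := by omega
        exact hind a ha (hb' ▸ hb)
  · -- left inverse
    intro I hI
    simp only [Finset.mem_filter, Finset.mem_univ, true_and] at hI
    obtain ⟨hind, h0⟩ := hI
    have hk := key I hind h0
    rw [Finset.image_image]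
    have him : Finset.image ((fun a : ℕ => ((a+2:ℕ) : ZMod m)) ∘ fun x : ZMod m => x.val - 2)
        (I.erase 0) = Finset.image id (I.erase 0) := by
      apply Finset.image_congr
      intro x hx
      simp only [Finset.mem_coe] at hx
      have := hk x hx
      simp only [Function.comp_apply, id_eq]
      rw [show x.val - 2 + 2 = x.val by omega, zcast_val]
    rw [him, Finset.image_id, Finset.insert_erase h0]
  · -- right inverse
    intro J hJ
    simp only [pathSet, Finset.mem_filter, Finset.mem_powerset] at hJ
    obtain ⟨hsub, hind⟩ := hJ
    have hlt : ∀ a ∈ J, a + 3 < m := by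
      intro a ha; have := hsub ha; simp only [Finset.mem_range] at this; omega
    have hvcast : ∀ a ∈ J, ((a+2 : ℕ) : ZMod m).val = a + 2 := by
      intro a ha; exact ZMod.val_cast_of_lt (by have := hlt a ha; omega)
    have h0im : (0 : ZMod m) ∉ J.image (fun a : ℕ => ((a+2 : ℕ) : ZMod m)) := by
      intro h
      simp only [Finset.mem_image] at h
      obtain ⟨a, ha, hax⟩ := h
      have := hvcast a ha
      rw [hax, ZMod.val_zero] at this; omega
    rw [Finset.erase_insert h0im, Finset.image_image]
    conv_rhs => rw [← Finset.image_id (s := J)]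
    apply Finset.image_congr
    intro a ha
    simp only [Finset.mem_coe] at ha
    simp only [Function.comp_apply, id_eq]
    rw [hvcast a ha]
    omega
  · -- values
    intro I hI
    simp only [Finset.mem_filter, Finset.mem_univ, true_and] at hI
    obtain ⟨hind, h0⟩ := hI
    have hk := key I hind h0
    rw [Finset.card_image_of_injOn (by
      intro a ha b hb hab
      dsimp only at hab
      have h1 := hk a ha
      have h2 := hk b hb
      exact zval_inj (by omega))]
    rw [Finset.card_erase_of_mem h0]
    have hcard : 1 ≤ I.card := Finset.card_pos.mpr ⟨0, h0⟩
    obtain ⟨c, hc⟩ : ∃ c, I.card = c + 1 := ⟨I.card - 1, by omega⟩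
    rw [hc, Nat.add_sub_cancel, pow_succ]
    ring
end


open Classical

/-- **Reduced Euler characteristic of `Ind(C_m)` (from Proposition 2.6).**
For `m ≥ 3` and `k = ⌊(m+1)/3⌋`, the sum of `(−1)^{|I|}` over all subsets
`I ⊆ ZMod m` with no two cyclically consecutive elements equals `2(−1)^k`
if `3 ∣ m` and `(−1)^k` otherwise. -/
theorem cohomology_of_colorings_of_cycles_stmt8
    (m : ℕ) [NeZero m] (hm : 3 ≤ m) :
    ∑ I ∈ Finset.univ.filter (fun I : Finset (ZMod m) => ∀ i ∈ I, i + 1 ∉ I),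
      (-1 : ℤ) ^ I.card
    = if 3 ∣ m then 2 * (-1 : ℤ) ^ ((m + 1) / 3) else (-1 : ℤ) ^ ((m + 1) / 3) := by
  rw [← Finset.sum_filter_add_sum_filter_not
    (Finset.univ.filter (fun I : Finset (ZMod m) => ∀ i ∈ I, i + 1 ∉ I))
    (fun I => (0:ZMod m) ∈ I)]
  rw [sumB hm, sumA hm, ← numeric m hm]
  ring
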